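/- For δ ≥ 1, define F_δ = (n ↦ d_k(δn)) ⋆ μ^k (Dirichlet convolution with Popovici's function). Then F_δ(n) = 0 unless n divides δ^{k-1}. -/

import Mathlib

open scoped BigOperators

/-- The `k`-fold divisor function, as the `k`-th Dirichlet-convolution power of `ζ`. -/
def dk (k : ℕ) : ArithmeticFunction ℕ := (ArithmeticFunction.zeta) ^ k

/-- Popovici's function `μ^k`: the `k`-fold Dirichlet-convolution power of the Möbius function. -/
def mupow (k : ℕ) : ArithmeticFunction ℤ := (ArithmeticFunction.moebius) ^ k

/-- `F_δ = (n ↦ d_k(δn)) ⋆ μ^k`. -/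
def Fdelta (k δ : ℕ) (n : ℕ) : ℤ :=
  ∑ x ∈ n.divisorsAntidiagonal, (dk k (δ * x.1) : ℤ) * mupow k x.2

open ArithmeticFunction Finset Nat

lemma dk_mult (k : ℕ) : (dk k).IsMultiplicative := by
  unfold dk
  induction k with
  | zero => simpa using ArithmeticFunction.isMultiplicative_one
  | succ n ih => rw [pow_succ]; exact ih.mul isMultiplicative_zeta

lemma mupow_mult (k : ℕ) : (mupow k).IsMultiplicative := by
  unfold mupow
  induction k with
  | zero => simpa using ArithmeticFunction.isMultiplicative_one
  | succ n ih => rw [pow_succ]; exact ih.mul isMultiplicative_moebius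

lemma Fdelta_split (k : ℕ) {m n d1 d2 : ℕ} (cop : m.Coprime n) (h12 : d1.Coprime d2)
    (h1n : d1.Coprime n) (h2m : d2.Coprime m) :
    Fdelta k (d1 * d2) (m * n) = Fdelta k d1 m * Fdelta k d2 n := by
  unfold Fdelta
  rw [sum_mul_sum, ← sum_product']
  symm
  apply sum_nbij fun ((i, j), k, l) ↦ (i * k, j * l)
  · rintro ⟨⟨a1, a2⟩, ⟨b1, b2⟩⟩ h
    simp only [mem_divisorsAntidiagonal, Ne, mem_product] at h
    rcases h with ⟨⟨rfl, ha⟩, ⟨rfl, hb⟩⟩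
    simp only [mem_divisorsAntidiagonal, Nat.mul_eq_zero, Ne]
    constructor
    · ring
    rw [Nat.mul_eq_zero] at *
    apply not_or_intro ha hb
  · simp only [Set.InjOn, mem_coe, mem_divisorsAntidiagonal, Ne, mem_product, Prod.mk_inj]
    rintro ⟨⟨a1, a2⟩, ⟨b1, b2⟩⟩ ⟨⟨rfl, ha⟩, ⟨rfl, hb⟩⟩ ⟨⟨c1, c2⟩, ⟨d1, d2⟩⟩ hcd h
    simp only [Prod.mk_inj] at h
    ext <;> dsimp only
    · trans Nat.gcd (a1 * a2) (a1 * b1)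
      · rw [Nat.gcd_mul_left, cop.coprime_mul_left.coprime_mul_right_right.gcd_eq_one, mul_one]
      · rw [← hcd.1.1, ← hcd.2.1] at cop
        rw [← hcd.1.1, h.1, Nat.gcd_mul_left,
          cop.coprime_mul_left.coprime_mul_right_right.gcd_eq_one, mul_one]
    · trans Nat.gcd (a1 * a2) (a2 * b2)
      · rw [mul_comm, Nat.gcd_mul_left, cop.coprime_mul_right.coprime_mul_left_right.gcd_eq_one,
          mul_one]
      · rw [← hcd.1.1, ← hcd.2.1] at cop
        rw [← hcd.1.1, h.2, mul_comm, Nat.gcd_mul_left,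
          cop.coprime_mul_right.coprime_mul_left_right.gcd_eq_one, mul_one]
    · trans Nat.gcd (b1 * b2) (a1 * b1)
      · rw [mul_comm, Nat.gcd_mul_right,
          cop.coprime_mul_right.coprime_mul_left_right.symm.gcd_eq_one, one_mul]
      · rw [← hcd.1.1, ← hcd.2.1] at cop
        rw [← hcd.2.1, h.1, mul_comm c1 d1, Nat.gcd_mul_left,
          cop.coprime_mul_right.coprime_mul_left_right.symm.gcd_eq_one, mul_one]
    · trans Nat.gcd (b1 * b2) (a2 * b2)
      · rw [Nat.gcd_mul_right, cop.coprime_mul_left.coprime_mul_right_right.symm.gcd_eq_one,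
          one_mul]
      · rw [← hcd.1.1, ← hcd.2.1] at cop
        rw [← hcd.2.1, h.2, Nat.gcd_mul_right,
          cop.coprime_mul_left.coprime_mul_right_right.symm.gcd_eq_one, one_mul]
  · simp only [Set.SurjOn, Set.subset_def, mem_coe, mem_divisorsAntidiagonal, Ne, mem_product,
      Set.mem_image, exists_prop, Prod.mk_inj]
    rintro ⟨b1, b2⟩ h
    dsimp at h
    use ((b1.gcd m, b2.gcd m), (b1.gcd n, b2.gcd n))
    rw [← cop.gcd_mul _, ← cop.gcd_mul _, ← h.1, Nat.gcd_mul_gcd_of_coprime_of_mul_eq_mul cop h.1,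
      Nat.gcd_mul_gcd_of_coprime_of_mul_eq_mul cop.symm _]
    · rw [Nat.mul_eq_zero, not_or] at h
      simp [h.2.1, h.2.2]
    rw [mul_comm n m, h.1]
  · simp only [mem_divisorsAntidiagonal, Ne, mem_product]
    rintro ⟨⟨a1, a2⟩, ⟨b1, b2⟩⟩ ⟨⟨rfl, ha⟩, ⟨rfl, hb⟩⟩
    dsimp only
    have c12 : d1.Coprime b1 := h1n.coprime_dvd_right ⟨b2, rfl⟩
    have c21 : a1.Coprime d2 := (h2m.coprime_dvd_right ⟨a2, rfl⟩).symm
    have c22 : a1.Coprime b1 :=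
      (Nat.Coprime.coprime_dvd_left ⟨a2, rfl⟩ cop).coprime_dvd_right ⟨b2, rfl⟩
    have hc1 : (d1 * a1).Coprime (d2 * b1) :=
      (h12.mul_right c12).mul (c21.mul_right c22)
    have hc2 : a2.Coprime b2 :=
      cop.coprime_mul_left.coprime_mul_left_right
    have key : dk k (d1 * d2 * (a1 * b1)) = dk k (d1 * a1) * dk k (d2 * b1) := by
      rw [show d1 * d2 * (a1 * b1) = (d1 * a1) * (d2 * b1) by ring]
      exact (dk_mult k).map_mul_of_coprime hc1
    rw [key, (mupow_mult k).map_mul_of_coprime hc2]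
    push_cast
    ring
lemma mupow_prime_pow_eq_zero {p : ℕ} (hp : p.Prime) :
    ∀ k j : ℕ, k < j → mupow k (p ^ j) = 0 := by
  intro k
  induction k with
  | zero =>
    intro j hj
    have : p ^ j ≠ 1 := Nat.one_lt_pow (by omega) hp.one_lt |>.ne'
    simp [mupow, ArithmeticFunction.one_apply, this, hp.ne_one, hj.ne']
  | succ n ih =>
    intro j hj
    have : mupow (n+1) = mupow n * ArithmeticFunction.moebius := by
      simp [mupow, pow_succ]
    rw [this, ArithmeticFunction.mul_apply,
      Nat.sum_divisorsAntidiagonal (fun a b => mupow n a * ArithmeticFunction.moebius b),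
      Nat.sum_divisors_prime_pow hp]
    apply Finset.sum_eq_zero
    intro i hi
    simp only [Finset.mem_range] at hi
    rcases lt_or_ge n i with h | h
    · rw [ih i h, zero_mul]
    · have h2 : p ^ j / p ^ i = p ^ (j - i) := Nat.pow_div (by omega) hp.pos
      rw [h2, ArithmeticFunction.moebius_apply_prime_pow hp (by omega), if_neg (by omega),
        mul_zero]
lemma dk_cast (k : ℕ) : ((dk k : ArithmeticFunction ℕ) : ArithmeticFunction ℤ)
    = ((ArithmeticFunction.zeta : ArithmeticFunction ℕ) : ArithmeticFunction ℤ) ^ k := by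
  unfold dk
  induction k with
  | zero => simp [natCoe_one]
  | succ n ih => rw [pow_succ, pow_succ, natCoe_mul, ih]

lemma conv_eq_one (k : ℕ) :
    ((dk k : ArithmeticFunction ℕ) : ArithmeticFunction ℤ) * mupow k = 1 := by
  rw [dk_cast, mupow, ← mul_pow, coe_zeta_mul_moebius, one_pow]

lemma Fdelta_one (k n : ℕ) :
    Fdelta k 1 n = (((dk k : ArithmeticFunction ℕ) : ArithmeticFunction ℤ) * mupow k) n := by
  simp [Fdelta, ArithmeticFunction.mul_apply, natCoe_apply]

lemma Fdelta_prime_pow (k : ℕ) {p : ℕ} (hp : p.Prime) (e m : ℕ) (hem : 1 ≤ e + m)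
    (hcase : e = 0 ∨ k ≤ m) : Fdelta k (p ^ e) (p ^ m) = 0 := by
  have hne : p ^ (e + m) ≠ 1 := (Nat.one_lt_pow (by omega) hp.one_lt).ne'
  rcases hcase with rfl | hkm
  · rw [pow_zero, Fdelta_one, conv_eq_one, ArithmeticFunction.one_apply, if_neg]
    rw [zero_add] at hne
    exact hne
  · have key : Fdelta k (p ^ e) (p ^ m)
        = (((dk k : ArithmeticFunction ℕ) : ArithmeticFunction ℤ) * mupow k) (p ^ (e + m)) := by
      rw [Fdelta, Nat.sum_divisorsAntidiagonal (fun a b => ((dk k (p ^ e * a) : ℤ)) * mupow k b),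
        Nat.sum_divisors_prime_pow hp, ArithmeticFunction.mul_apply,
        Nat.sum_divisorsAntidiagonal
          (fun a b => ((dk k : ArithmeticFunction ℕ) : ArithmeticFunction ℤ) a * mupow k b),
        Nat.sum_divisors_prime_pow hp]
      have hL : ∀ i ∈ Finset.range (m + 1), (dk k (p ^ e * p ^ i) : ℤ) * mupow k (p ^ m / p ^ i)
          = (dk k (p ^ (e + i)) : ℤ) * mupow k (p ^ (e + m - (e + i))) := by
        intro i hi
        simp only [Finset.mem_range] at hi
        rw [← pow_add, Nat.pow_div (by omega) hp.pos]
        congr 3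
        omega
      rw [Finset.sum_congr rfl hL]
      have hR : ∀ i ∈ Finset.range (e + m + 1),
          ((dk k : ArithmeticFunction ℕ) : ArithmeticFunction ℤ) (p ^ i)
            * mupow k (p ^ (e + m) / p ^ i)
          = (dk k (p ^ i) : ℤ) * mupow k (p ^ (e + m - i)) := by
        intro i hi
        simp only [Finset.mem_range] at hi
        rw [natCoe_apply, Nat.pow_div (by omega) hp.pos]
      rw [Finset.sum_congr rfl hR]
      have h2 : (∑ i ∈ Finset.Ico e (e + m + 1), (dk k (p ^ i) : ℤ) * mupow k (p ^ (e + m - i)))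
          = ∑ i ∈ Finset.range (m + 1),
              (dk k (p ^ (e + i)) : ℤ) * mupow k (p ^ (e + m - (e + i))) := by
        rw [Finset.sum_Ico_eq_sum_range]
        have hr : e + m + 1 - e = m + 1 := by omega
        rw [hr]
      have hsplit : (∑ i ∈ Finset.Ico 0 e, (dk k (p ^ i) : ℤ) * mupow k (p ^ (e + m - i)))
            + (∑ i ∈ Finset.Ico e (e + m + 1), (dk k (p ^ i) : ℤ) * mupow k (p ^ (e + m - i)))
          = ∑ i ∈ Finset.Ico 0 (e + m + 1), (dk k (p ^ i) : ℤ) * mupow k (p ^ (e + m - i)) :=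
        Finset.sum_Ico_consecutive _ (Nat.zero_le e) (by omega)
      have hzero : (∑ i ∈ Finset.Ico 0 e, (dk k (p ^ i) : ℤ) * mupow k (p ^ (e + m - i))) = 0 := by
        apply Finset.sum_eq_zero
        intro i hi
        simp only [Finset.mem_Ico] at hi
        rw [mupow_prime_pow_eq_zero hp k _ (by omega), mul_zero]
      rw [← h2, Finset.range_eq_Ico, ← hsplit, hzero, zero_add]
    rw [key, conv_eq_one, ArithmeticFunction.one_apply, if_neg hne]

theorem stmt4 (k δ : ℕ) (hδ : 1 ≤ δ) (n : ℕ) (h : ¬ n ∣ δ ^ (k - 1)) :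
    Fdelta k δ n = 0 := by
  rcases eq_or_ne n 0 with rfl | hn
  · simp [Fdelta]
  have hδ0 : δ ≠ 0 := by omega
  have hpow : δ ^ (k - 1) ≠ 0 := pow_ne_zero _ hδ0
  rw [← Nat.factorization_le_iff_dvd hn hpow, Finsupp.le_def] at h
  push_neg at h
  obtain ⟨p, hp⟩ := h
  have hpp : p.Prime := by
    by_contra hnp
    rw [Nat.factorization_eq_zero_of_not_prime n hnp] at hp
    omega
  rw [Nat.factorization_pow, Finsupp.smul_apply, smul_eq_mul] at hp
  set m := n.factorization p with hm
  set e := δ.factorization p with he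
  have cop1 : Nat.Coprime p (n / p ^ m) := Nat.coprime_ordCompl hpp hn
  have cop2 : Nat.Coprime p (δ / p ^ e) := Nat.coprime_ordCompl hpp hδ0
  have hn' : n = p ^ m * (n / p ^ m) := (Nat.ordProj_mul_ordCompl_eq_self n p).symm
  have hδ' : δ = p ^ e * (δ / p ^ e) := (Nat.ordProj_mul_ordCompl_eq_self δ p).symm
  rw [hδ', hn', Fdelta_split k (cop1.pow_left m) (cop2.pow_left e) (cop1.pow_left e)
    (cop2.symm.pow_right m)]
  have hloc : Fdelta k (p ^ e) (p ^ m) = 0 := by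
    apply Fdelta_prime_pow k hpp e m (by omega)
    rcases Nat.eq_zero_or_pos e with he0 | hepos
    · exact Or.inl he0
    · have : k - 1 ≤ (k - 1) * e := Nat.le_mul_of_pos_right _ hepos
      exact Or.inr (by omega)
  rw [hloc, zero_mul]
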